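/- For q ∈ (0,1) and l ≥ 1 odd, the quantum teardrop relations hold for the elements a = dd*, b = cd in O(L_q(l;1,l)): a* = a, ab = q^{-2l}ba, bb* = q^{2l}a(a;q²)_l, b*b = a(q^{-2}a;q^{-2})_l. That is, O(WP_q(1,l)) embeds into O(L_q(l;1,l)) via a ↦ dd*, b ↦ cd. -/

import Mathlib

private lemma list_prod_comm_aux {A : Type*} [Monoid A] (x : A) (L : List A)
    (h : ∀ y ∈ L, y * x = x * y) : L.prod * x = x * L.prod := by
  induction L with
  | nil => simp
  | cons y L ih =>
    rw [List.prod_cons, mul_assoc, ih (fun z hz => h z (List.mem_cons_of_mem _ hz)),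
      ← mul_assoc, h y List.mem_cons_self, mul_assoc]

/-- For `q ∈ (0,1)` and odd `l ≥ 1`, the elements `a = dd*` and `b = cd`
of the quantum lens space algebra `O(L_q(l;1,l))` satisfy the defining relations of the
quantum teardrop algebra `O(WP_q(1,l))`: `a* = a`, `ab = q^{-2l} ba`,
`bb* = q^{2l} a (a;q²)_l`, `b*b = a (q^{-2}a;q^{-2})_l`. -/
theorem quantum_teardrop_embeds
    (q : ℝ) (hq : q ∈ Set.Ioo (0 : ℝ) 1) (l : ℕ) (hl : 1 ≤ l) (hodd : Odd l)
    (A : Type*) [Ring A] [Algebra ℂ A] [StarRing A]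
    (c d : A)
    (h1 : c * d = (q : ℂ) ^ l • (d * c))
    (h2 : c * star d = (q : ℂ) ^ l • (star d * c))
    (h3 : d * star d = star d * d)
    (h4 : c * star c
      = ((List.range l).map
          (fun m => (1 : A) - ((q : ℂ) ^ (2 * m)) • (d * star d))).prod)
    (h5 : star c * c
      = ((List.range l).map
          (fun m => (1 : A) - ((q : ℂ) ^ (-(2 * (m + 1)) : ℤ)) • (d * star d))).prod) :
    star (d * star d) = d * star d ∧
    (d * star d) * (c * d) = (q : ℂ) ^ (-(2 * l) : ℤ) • ((c * d) * (d * star d)) ∧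
    (c * d) * star (c * d)
      = (q : ℂ) ^ (2 * l) • ((d * star d) *
          ((List.range l).map
            (fun m => (1 : A) - ((q : ℂ) ^ (2 * m)) • (d * star d))).prod) ∧
    star (c * d) * (c * d)
      = (d * star d) *
          ((List.range l).map
            (fun m => (1 : A) - ((q : ℂ) ^ (-(2 * (m + 1)) : ℤ)) • (d * star d))).prod := by
  have hq0 : (q : ℂ) ≠ 0 := by
    exact_mod_cast ne_of_gt hq.1
  have hql : (q : ℂ) ^ l ≠ 0 := pow_ne_zero _ hq0
  -- inverse versions
  have i1 : d * c = ((q : ℂ) ^ l)⁻¹ • (c * d) := by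
    rw [h1, inv_smul_smul₀ hql]
  have i2 : star d * c = ((q : ℂ) ^ l)⁻¹ • (c * star d) := by
    rw [h2, inv_smul_smul₀ hql]
  -- a commutes with star d
  have hadstar : (d * star d) * star d = star d * (d * star d) := by
    rw [h3, mul_assoc, h3]
  -- each factor with nonneg powers commutes with a and with star d
  refine ⟨by simp [star_mul], ?_, ?_, ?_⟩
  · -- a b = q^{-2l} b a
    have key : (d * star d) * (c * d)
        = (((q : ℂ) ^ l)⁻¹ * ((q : ℂ) ^ l)⁻¹) • ((c * d) * (d * star d)) := by
      calc (d * star d) * (c * d) = d * (star d * c) * d := by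
            rw [mul_assoc, mul_assoc, mul_assoc]
        _ = ((q : ℂ) ^ l)⁻¹ • (d * (c * star d) * d) := by
            rw [i2, mul_smul_comm, smul_mul_assoc]
        _ = ((q : ℂ) ^ l)⁻¹ • ((d * c) * (star d * d)) := by
            rw [mul_assoc, mul_assoc, mul_assoc]
        _ = (((q : ℂ) ^ l)⁻¹ * ((q : ℂ) ^ l)⁻¹) • ((c * d) * (d * star d)) := by
            rw [i1, h3, smul_mul_assoc, smul_smul]
    rw [key]
    congr 1
    rw [← mul_inv, ← pow_add, zpow_neg, ← zpow_natCast (q : ℂ) (l + l)]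
    congr 1
    push_cast
    ring
  · -- b b* = q^{2l} • (a * P)
    calc (c * d) * star (c * d) = c * ((d * star d) * star c) := by
          rw [star_mul]
          simp only [mul_assoc]
      _ = (c * star d) * (d * star c) := by
          rw [h3]
          simp only [mul_assoc]
      _ = (q : ℂ) ^ l • (star d * ((c * d) * star c)) := by
          rw [h2, smul_mul_assoc]
          simp only [mul_assoc]
      _ = ((q : ℂ) ^ l * (q : ℂ) ^ l) • ((star d * d) * (c * star c)) := by
          rw [h1, smul_mul_assoc, mul_smul_comm, smul_smul]
          simp only [mul_assoc]
      _ = (q : ℂ) ^ (2 * l) • ((d * star d) *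
          ((List.range l).map
            (fun m => (1 : A) - ((q : ℂ) ^ (2 * m)) • (d * star d))).prod) := by
          rw [← h3, h4, ← pow_add, two_mul]
  · -- b* b = a * Q
    have hQdef := h5
    set Q := ((List.range l).map
        (fun m => (1 : A) - ((q : ℂ) ^ (-(2 * (m + 1)) : ℤ)) • (d * star d))).prod with hQ
    have hQstar : Q * star d = star d * Q := by
      apply list_prod_comm_aux
      intro y hy
      simp only [List.mem_map] at hy
      obtain ⟨m, _, rfl⟩ := hy
      rw [sub_mul, mul_sub, one_mul, mul_one, smul_mul_assoc, mul_smul_comm, hadstar]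
    have hQa : Q * (d * star d) = (d * star d) * Q := by
      apply list_prod_comm_aux
      intro y hy
      simp only [List.mem_map] at hy
      obtain ⟨m, _, rfl⟩ := hy
      rw [sub_mul, mul_sub, one_mul, mul_one, smul_mul_assoc, mul_smul_comm]
    calc star (c * d) * (c * d) = star d * (star c * c) * d := by
          rw [star_mul, mul_assoc, mul_assoc, mul_assoc]
      _ = star d * Q * d := by rw [hQdef]
      _ = Q * (star d * d) := by rw [← hQstar, mul_assoc]
      _ = (d * star d) * Q := by rw [← h3, hQa]
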